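/- In the limit of small k and m with fixed ratio, the walk dispersion relation ω(k) = arccos(√(1−m²) cos k) approximates the Dirac relation: arccos(√(1−m²)cos k)² − (k² + m²) = o(k² + m²) as (k,m) → (0,0). -/

import Mathlib

open Filter Topology

private lemma phi_bounds_nonneg (x : ℝ) (hx : 0 ≤ x) :
    0 ≤ x^2 - Real.sin x ^2 ∧ x^2 - Real.sin x ^2 ≤ x^4 := by
  refine ⟨by nlinarith [Real.sin_sq_le_sq (x := x)], ?_⟩
  rcases le_or_gt x 1 with h1 | h1
  · rcases eq_or_lt_of_le hx with h0 | h0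
    · simp [← h0]
    · have hs : x - x ^ 3 / 4 < Real.sin x := by
        have := Real.sin_gt_sub_cube h0; nlinarith [pow_pos h0 3]
      have hx2 : x^2 ≤ 1 := by nlinarith
      have hs0 : 0 ≤ x - x^3/4 := by nlinarith [mul_nonneg h0.le (sub_nonneg.mpr hx2)]
      nlinarith [pow_le_pow_left₀ hs0 hs.le 2, sq_nonneg (x^3), sq_nonneg x]
  · have hx2 : 1 ≤ x^2 := by nlinarith
    nlinarith [sq_nonneg (Real.sin x), mul_nonneg (sq_nonneg x) (sub_nonneg.mpr hx2)]

private lemma phi_bounds (x : ℝ) :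
    0 ≤ x^2 - Real.sin x ^2 ∧ x^2 - Real.sin x ^2 ≤ x^4 := by
  rcases le_or_gt 0 x with h | h
  · exact phi_bounds_nonneg x h
  · have h' := phi_bounds_nonneg (-x) (by linarith)
    rw [Real.sin_neg] at h'
    exact ⟨by nlinarith [h'.1], by nlinarith [h'.2]⟩

set_option maxHeartbeats 1000000 in
private lemma key (k m : ℝ) (hk : |k| < Real.pi/2) (hm : |m| < 1) :
    |(Real.arccos (Real.sqrt (1 - m^2) * Real.cos k))^2 - k^2 - m^2|
      ≤ 9 * (k^2 + m^2)^2 := by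
  have hm2 : m^2 ≤ 1 := by nlinarith [abs_nonneg m, sq_abs m, le_abs_self m, neg_abs_le m]
  obtain ⟨hk1, hk2⟩ := abs_lt.mp hk
  have hck : 0 < Real.cos k := Real.cos_pos_of_mem_Ioo ⟨by linarith, hk2⟩
  have hx0 : 0 ≤ Real.sqrt (1 - m^2) * Real.cos k :=
    mul_nonneg (Real.sqrt_nonneg _) hck.le
  have hsq : Real.sqrt (1 - m^2) ^ 2 = 1 - m^2 := Real.sq_sqrt (by linarith)
  have hsqle : Real.sqrt (1 - m^2) ≤ 1 := by
    nlinarith [Real.sqrt_nonneg (1 - m^2), sq_nonneg m]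
  have hx1 : Real.sqrt (1 - m^2) * Real.cos k ≤ 1 := by
    have := Real.cos_le_one k
    nlinarith [Real.sqrt_nonneg (1 - m^2)]
  set ω := Real.arccos (Real.sqrt (1 - m^2) * Real.cos k) with hωdef
  have hω0 : 0 ≤ ω := Real.arccos_nonneg _
  have hωle : ω ≤ Real.pi/2 := (Real.arccos_le_pi_div_two).mpr hx0
  have hsin : Real.sin ω = Real.sqrt (1 - (Real.sqrt (1 - m^2) * Real.cos k)^2) :=
    Real.sin_arccos _
  have hpyth := Real.sin_sq_add_cos_sq k
  have hsin2 : Real.sin ω ^2 = Real.sin k ^2 + m^2 * Real.cos k ^2 := by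
    rw [hsin, Real.sq_sqrt (by nlinarith [sq_nonneg (Real.sqrt (1 - m^2) * Real.cos k)])]
    nlinarith [hsq]
  have hmul : 2 / Real.pi * ω ≤ Real.sin ω := Real.mul_le_sin hω0 hωle
  have hpi : 0 < Real.pi := Real.pi_pos
  have hωsin : ω ≤ Real.pi/2 * Real.sin ω := by
    rw [div_mul_eq_mul_div, div_le_iff₀ hpi] at hmul
    nlinarith
  have hsk2 : Real.sin k ^2 ≤ k^2 := Real.sin_sq_le_sq
  have hck2 : Real.cos k ^2 ≤ 1 := by
    nlinarith [Real.cos_le_one k, Real.neg_one_le_cos k]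
  have hsinω2 : Real.sin ω ^2 ≤ k^2 + m^2 := by
    rw [hsin2]; nlinarith [sq_nonneg m]
  have hω2 : ω^2 ≤ Real.pi^2/4 * (k^2 + m^2) := by
    have hsω : 0 ≤ Real.sin ω := Real.sin_nonneg_of_nonneg_of_le_pi hω0 (by linarith)
    nlinarith [hωsin, sq_nonneg (Real.sin ω)]
  obtain ⟨hA0, hA1⟩ := phi_bounds ω
  obtain ⟨hB0, hB1⟩ := phi_bounds k
  have hdecomp : ω^2 - k^2 - m^2
      = (ω^2 - Real.sin ω ^2) - (k^2 - Real.sin k ^2) - m^2 * Real.sin k ^2 := by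
    rw [hsin2]; nlinarith [hpyth]
  have hpi4 : Real.pi^4 ≤ 112 := by
    have h1 : Real.pi ≤ 3.15 := by linarith [Real.pi_lt_d2]
    have h2 : Real.pi^2 ≤ 10 := by nlinarith
    nlinarith [sq_nonneg Real.pi]
  have hω4 : ω^4 ≤ (Real.pi^2/4 * (k^2+m^2))^2 := by
    calc ω^4 = (ω^2)^2 := by ring
      _ ≤ (Real.pi^2/4 * (k^2+m^2))^2 := pow_le_pow_left₀ (sq_nonneg ω) hω2 2
  have hA : ω^2 - Real.sin ω ^2 ≤ 7 * (k^2 + m^2)^2 := by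
    nlinarith [sq_nonneg (k^2+m^2)]
  have hC : m^2 * Real.sin k ^2 ≤ (k^2+m^2)^2 := by
    nlinarith [sq_nonneg (k^2 - m^2), sq_nonneg m]
  have hB : k^2 - Real.sin k ^2 ≤ (k^2+m^2)^2 := by
    nlinarith [sq_nonneg m, sq_nonneg k, sq_nonneg (k^2+m^2)]
  rw [hdecomp, abs_le]
  constructor
  · nlinarith [sq_nonneg (Real.sin k), sq_nonneg m, sq_nonneg (k^2+m^2)]
  · nlinarith [sq_nonneg (Real.sin k), sq_nonneg m, sq_nonneg (k^2+m^2)]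

/-- In the limit of small `k` and `m`, the walk dispersion
`ω = arccos(√(1−m²) cos k)` recovers the Dirac relation:
`ω² = k² + m² + o(k² + m²)` as `(k,m) → (0,0)`. -/
theorem stmt_14 :
    Tendsto
      (fun p : ℝ × ℝ =>
        ((Real.arccos (Real.sqrt (1 - p.2^2) * Real.cos p.1))^2 - p.1^2 - p.2^2)
          / (p.1^2 + p.2^2))
      (nhdsWithin (0, 0) {p : ℝ × ℝ | p ≠ (0, 0)})
      (nhds 0) := by
  have hg : Tendsto (fun p : ℝ × ℝ => 9 * (p.1^2 + p.2^2))
      (nhdsWithin (0, 0) {p : ℝ × ℝ | p ≠ (0, 0)}) (nhds 0) := by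
    have hc : Continuous (fun p : ℝ × ℝ => 9 * (p.1^2 + p.2^2)) := by continuity
    have h0 : Tendsto (fun p : ℝ × ℝ => 9 * (p.1^2 + p.2^2))
        (nhds ((0:ℝ), (0:ℝ))) (nhds 0) := by
      simpa using hc.tendsto ((0:ℝ), (0:ℝ))
    exact h0.mono_left nhdsWithin_le_nhds
  apply squeeze_zero_norm' _ hg
  have h1 : ∀ᶠ p : ℝ × ℝ in nhds ((0:ℝ), (0:ℝ)), |p.1| < Real.pi/2 := by
    have hc : Tendsto (fun p : ℝ × ℝ => |p.1|) (nhds ((0:ℝ), (0:ℝ))) (nhds 0) := by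
      simpa using (continuous_fst.abs.tendsto ((0:ℝ), (0:ℝ)))
    exact hc.eventually_lt_const (by positivity)
  have h2 : ∀ᶠ p : ℝ × ℝ in nhds ((0:ℝ), (0:ℝ)), |p.2| < 1 := by
    have hc : Tendsto (fun p : ℝ × ℝ => |p.2|) (nhds ((0:ℝ), (0:ℝ))) (nhds 0) := by
      simpa using (continuous_snd.abs.tendsto ((0:ℝ), (0:ℝ)))
    exact hc.eventually_lt_const one_pos
  have h12 : ∀ᶠ p : ℝ × ℝ in nhdsWithin (0, 0) {p : ℝ × ℝ | p ≠ (0, 0)},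
      |p.1| < Real.pi/2 ∧ |p.2| < 1 :=
    (h1.and h2).filter_mono nhdsWithin_le_nhds
  have hne : ∀ᶠ p : ℝ × ℝ in nhdsWithin (0, 0) {p : ℝ × ℝ | p ≠ (0, 0)},
      p ≠ (0, 0) := eventually_mem_nhdsWithin
  filter_upwards [h12, hne] with p hp hpne
  obtain ⟨hpk, hpm⟩ := hp
  have hpos : 0 < p.1^2 + p.2^2 := by
    rcases not_and_or.mp (by simpa [Prod.ext_iff] using hpne) with h | h
    · positivity
    · positivity
  rw [Real.norm_eq_abs, abs_div, abs_of_pos hpos, div_le_iff₀ hpos]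
  calc |(Real.arccos (Real.sqrt (1 - p.2^2) * Real.cos p.1))^2 - p.1^2 - p.2^2|
      ≤ 9 * (p.1^2 + p.2^2)^2 := key p.1 p.2 hpk hpm
    _ = 9 * (p.1^2 + p.2^2) * (p.1^2 + p.2^2) := by ring
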